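/- Let μ, C, b > 0 with 0 < C < μ, and let X_1,...,X_n be [0,b]-valued random variables with |E[X_t|X_1,...,X_{t-1}] - μ| ≤ C. Define X̂_t = (μ+C)·X_t / E[X_t | X̂_1,...,X̂_{t-1}]. Then X̂_t ≥ X_t almost surely, X̂_t takes values in [0, b(μ+C)/(μ-C)], and E[X̂_t | X̂_1,...,X̂_{t-1}] = μ + C for all t. -/

import Mathlib

open MeasureTheory

/-- A sup of comaps equals the comap of the bundled map into a finite product. -/
lemma aux_sup_comap {Ω : Type*} (Z : ℕ → Ω → ℝ) (t : ℕ) :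
    (⨆ i ∈ Finset.range t, MeasurableSpace.comap (Z i) inferInstance : MeasurableSpace Ω) =
      MeasurableSpace.comap (fun ω (i : Fin t) => Z i ω) MeasurableSpace.pi := by
  apply le_antisymm
  · refine iSup₂_le fun i hi => ?_
    rw [Finset.mem_range] at hi
    have h1 : (MeasurableSpace.comap (Z i) inferInstance : MeasurableSpace Ω) =
        MeasurableSpace.comap (fun ω (j : Fin t) => Z j ω)
          (MeasurableSpace.comap (fun b : Fin t → ℝ => b ⟨i, hi⟩) inferInstance) := by
      rw [MeasurableSpace.comap_comp]
      rfl
    rw [h1]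
    exact MeasurableSpace.comap_mono (le_iSup (fun a : Fin t =>
      MeasurableSpace.comap (fun b : Fin t → ℝ => b a) inferInstance) ⟨i, hi⟩)
  · rw [MeasurableSpace.pi, MeasurableSpace.comap_iSup]
    refine iSup_le fun j => ?_
    rw [MeasurableSpace.comap_comp]
    have h2 : ((fun b : Fin t → ℝ => b j) ∘ fun ω (i : Fin t) => Z i ω) = Z j := rfl
    rw [h2]
    exact le_iSup₂ (f := fun i (_ : i ∈ Finset.range t) =>
      MeasurableSpace.comap (Z i) inferInstance) (j : ℕ) (Finset.mem_range.2 j.isLt)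

/-- Factorization of a simple function measurable w.r.t. a comap σ-algebra. -/
lemma aux_factor_simple {Ω β : Type*} [mβ : MeasurableSpace β] (W : Ω → β)
    (s : @SimpleFunc Ω (mβ.comap W) ENNReal) :
    ∃ φ : β → ENNReal, Measurable φ ∧ ∀ ω, s ω = φ (W ω) := by
  letI : MeasurableSpace Ω := mβ.comap W
  have h : ∀ c : ENNReal, ∃ B : Set β, MeasurableSet B ∧ W ⁻¹' B = s ⁻¹' {c} := fun c =>
    MeasurableSpace.measurableSet_comap.mp (@SimpleFunc.measurableSet_fiber Ω ENNReal (mβ.comap W) s c)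
  choose B hBmeas hBpre using h
  refine ⟨fun b => ∑ c ∈ s.range, c * (B c).indicator 1 b, ?_, ?_⟩
  · exact Finset.measurable_sum _ fun c _ =>
      (measurable_const.mul (measurable_one.indicator (hBmeas c)))
  · intro ω
    show s ω = ∑ c ∈ s.range, c * (B c).indicator 1 (W ω)
    rw [Finset.sum_eq_single_of_mem (s ω) (s.mem_range_self ω)]
    · have hmem : W ω ∈ B (s ω) := by
        have : ω ∈ W ⁻¹' B (s ω) := by rw [hBpre]; exact rfl
        exact this
      simp [Set.indicator_of_mem hmem]
    · intro c _ hc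
      have hnotmem : W ω ∉ B c := by
        intro hmem
        have h3 : ω ∈ s ⁻¹' {c} := by rw [← hBpre]; exact hmem
        have h4 : s ω = c := by simpa using h3
        exact hc h4.symm
      simp [Set.indicator_of_notMem hnotmem]

/-- Doob–Dynkin: a real-valued function measurable w.r.t. `comap W` factors through `W`. -/
lemma aux_doob {Ω β : Type*} [mβ : MeasurableSpace β] (W : Ω → β) (g : Ω → ℝ)
    (hg : Measurable[mβ.comap W] g) : ∃ φ : β → ℝ, Measurable φ ∧ ∀ ω, g ω = φ (W ω) := by
  letI : MeasurableSpace Ω := mβ.comap W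
  set g' : Ω → ENNReal := fun ω => ENNReal.ofReal (Real.arctan (g ω) + 2) with hg'def
  have hg'meas : Measurable g' :=
    ENNReal.measurable_ofReal.comp ((Real.continuous_arctan.measurable.comp hg).add measurable_const)
  have happ : ∀ ω, ⨆ n, (SimpleFunc.eapprox g' n) ω = g' ω := fun ω =>
    SimpleFunc.iSup_eapprox_apply hg'meas ω
  choose φn hφnmeas hφn using fun n => aux_factor_simple W (SimpleFunc.eapprox g' n)
  have htan : Measurable Real.tan := by
    have : Real.tan = fun x => Real.sin x / Real.cos x := funext fun x => Real.tan_eq_sin_div_cos x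
    rw [this]
    exact Real.continuous_sin.measurable.div Real.continuous_cos.measurable
  refine ⟨fun b => Real.tan ((⨆ n, φn n b).toReal - 2), ?_, ?_⟩
  · exact htan.comp ((ENNReal.measurable_toReal.comp (Measurable.iSup fun n => hφnmeas n)).sub
      measurable_const)
  · intro ω
    have h1 : (⨆ n, φn n (W ω)) = g' ω := by
      rw [← happ ω]
      exact iSup_congr fun n => (hφn n ω).symm
    have h2 : (0:ℝ) ≤ Real.arctan (g ω) + 2 := by
      have := Real.neg_pi_div_two_lt_arctan (g ω)
      have hpi : Real.pi < 4 := by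
        have := Real.pi_lt_d2
        linarith
      linarith
    show g ω = Real.tan ((⨆ n, φn n (W ω)).toReal - 2)
    rw [h1]
    show g ω = Real.tan ((ENNReal.ofReal (Real.arctan (g ω) + 2)).toReal - 2)
    rw [ENNReal.toReal_ofReal h2]
    simp [Real.tan_arctan]

/-- Conditional expectations w.r.t. a.e.-equivalent σ-algebras agree. -/
lemma aux_condexp_eq {Ω : Type*} {m₁ m₂ : MeasurableSpace Ω} [m0 : MeasurableSpace Ω]
    (P : Measure Ω) [IsProbabilityMeasure P] (hm₁ : m₁ ≤ m0) (hm₂ : m₂ ≤ m0)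
    {f : Ω → ℝ} (hf : Integrable f P)
    (hsets : ∀ s, MeasurableSet[m₁] s → ∃ s', MeasurableSet[m₂] s' ∧ s =ᵐ[P] s')
    (hfun : AEStronglyMeasurable[m₁] (P[f|m₂]) P) :
    P[f|m₂] =ᵐ[P] P[f|m₁] := by
  refine ae_eq_condExp_of_forall_setIntegral_eq hm₁ hf
    (fun s _ _ => integrable_condExp.integrableOn) (fun s hs _ => ?_) hfun
  obtain ⟨s', hs', hss'⟩ := hsets s hs
  rw [setIntegral_congr_set hss', setIntegral_condExp hm₂ hf hs', ← setIntegral_congr_set hss']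

lemma aux_pi_lambda {Ω ι : Type*} {m : MeasurableSpace Ω} (f : Ω → ι → ℝ)
    (hf : ∀ i, Measurable[m] fun ω => f ω i) : Measurable[m] f := by
  letI := m
  exact measurable_pi_lambda f hf

theorem stmt13 {Ω : Type*} [MeasurableSpace Ω] (P : Measure Ω) [IsProbabilityMeasure P]
    (X : ℕ → Ω → ℝ) (b μ C : ℝ) (hb : 0 < b) (hC : 0 < C) (hCμ : C < μ)
    (hmeas : ∀ t, Measurable (X t))
    (hrange : ∀ t, ∀ᵐ ω ∂P, X t ω ∈ Set.Icc 0 b)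
    (hcond : ∀ t, ∀ᵐ ω ∂P,
      |(P[X t | ⨆ i ∈ Finset.range t, MeasurableSpace.comap (X i) inferInstance]) ω - μ| ≤ C)
    (Y : ℕ → Ω → ℝ) (hYmeas : ∀ t, Measurable (Y t))
    (hYdef : ∀ t, ∀ᵐ ω ∂P,
      Y t ω = (μ + C) * X t ω /
        (P[X t | ⨆ i ∈ Finset.range t, MeasurableSpace.comap (Y i) inferInstance]) ω) :
    ∀ t, (∀ᵐ ω ∂P, X t ω ≤ Y t ω) ∧
      (∀ᵐ ω ∂P, Y t ω ∈ Set.Icc 0 (b * (μ + C) / (μ - C))) ∧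
      (P[Y t | ⨆ i ∈ Finset.range t, MeasurableSpace.comap (Y i) inferInstance]
        =ᵐ[P] fun _ => μ + C) := by
  let m0 : MeasurableSpace Ω := inferInstance
  let F : ℕ → MeasurableSpace Ω := fun n =>
    ⨆ i ∈ Finset.range n, MeasurableSpace.comap (X i) inferInstance
  let G : ℕ → MeasurableSpace Ω := fun n =>
    ⨆ i ∈ Finset.range n, MeasurableSpace.comap (Y i) inferInstance
  have hFle : ∀ n, F n ≤ m0 := fun n => iSup₂_le fun i _ => (hmeas i).comap_le
  have hGle : ∀ n, G n ≤ m0 := fun n => iSup₂_le fun i _ => (hYmeas i).comap_le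
  have hFmono : ∀ {i j : ℕ}, i ≤ j → F i ≤ F j := fun {i j} h =>
    biSup_mono fun k hk => Finset.mem_range.2 (lt_of_lt_of_le (Finset.mem_range.1 hk) h)
  have hGmono : ∀ {i j : ℕ}, i ≤ j → G i ≤ G j := fun {i j} h =>
    biSup_mono fun k hk => Finset.mem_range.2 (lt_of_lt_of_le (Finset.mem_range.1 hk) h)
  have hcomapXle : ∀ {i n : ℕ}, i < n → MeasurableSpace.comap (X i) inferInstance ≤ F n :=
    fun {i n} h => le_iSup₂ (f := fun i (_ : i ∈ Finset.range n) =>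
      MeasurableSpace.comap (X i) inferInstance) i (Finset.mem_range.2 h)
  have hcomapYle : ∀ {i n : ℕ}, i < n → MeasurableSpace.comap (Y i) inferInstance ≤ G n :=
    fun {i n} h => le_iSup₂ (f := fun i (_ : i ∈ Finset.range n) =>
      MeasurableSpace.comap (Y i) inferInstance) i (Finset.mem_range.2 h)
  have hμC : (0:ℝ) < μ - C := by linarith
  have hμC' : (0:ℝ) < μ + C := by linarith
  have hXint : ∀ t, Integrable (X t) P := fun t =>
    (integrable_const b).mono' (hmeas t).aestronglyMeasurable (by
      filter_upwards [hrange t] with ω h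
      rw [Real.norm_eq_abs, abs_of_nonneg h.1]
      exact h.2)
  have key : ∀ t : ℕ,
      (((P[X t | G t]) =ᵐ[P] (P[X t | F t])) ∧
        (∃ Z, Measurable[G (t+1)] Z ∧ X t =ᵐ[P] Z) ∧
        (∃ Z, Measurable[F (t+1)] Z ∧ Y t =ᵐ[P] Z)) ∧
      ((∀ᵐ ω ∂P, X t ω ≤ Y t ω) ∧
        (∀ᵐ ω ∂P, Y t ω ∈ Set.Icc 0 (b * (μ + C) / (μ - C))) ∧
        ((P[Y t | G t]) =ᵐ[P] fun _ => μ + C)) := by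
    intro t
    induction t using Nat.strong_induction_on with
    | _ t IH =>
    -- a.e. versions of past Y's measurable w.r.t. F t
    have hZY : ∀ i : Fin t, ∃ Z, Measurable[F t] Z ∧ Y i =ᵐ[P] Z := by
      intro i
      obtain ⟨Z, hZm, hZe⟩ := (IH i i.isLt).1.2.2
      exact ⟨Z, hZm.mono (hFmono i.isLt) le_rfl, hZe⟩
    have hZX : ∀ i : Fin t, ∃ Z, Measurable[G t] Z ∧ X i =ᵐ[P] Z := by
      intro i
      obtain ⟨Z, hZm, hZe⟩ := (IH i i.isLt).1.2.1
      exact ⟨Z, hZm.mono (hGmono i.isLt) le_rfl, hZe⟩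
    -- set transfer from G t to F t
    have hsets : ∀ s, MeasurableSet[G t] s → ∃ s', MeasurableSet[F t] s' ∧ s =ᵐ[P] s' := by
      intro s hs
      have hs2 : MeasurableSet[MeasurableSpace.comap (fun ω (i : Fin t) => Y i ω)
          MeasurableSpace.pi] s := (le_of_eq (aux_sup_comap Y t)) s hs
      obtain ⟨B, hB, hBs⟩ := MeasurableSpace.measurableSet_comap.mp hs2
      choose ZY hZYm hZYe using hZY
      have hW'meas : Measurable[F t] (fun ω (i : Fin t) => ZY i ω) :=
        aux_pi_lambda _ fun i => hZYm i
      refine ⟨(fun ω (i : Fin t) => ZY i ω) ⁻¹' B, hW'meas hB, ?_⟩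
      have hall : ∀ᵐ ω ∂P, ∀ i : Fin t, Y i ω = ZY i ω := ae_all_iff.2 fun i => hZYe i
      rw [Filter.eventuallyEq_set]
      filter_upwards [hall] with ω hω
      rw [← hBs]
      have : (fun i : Fin t => Y i ω) = fun i : Fin t => ZY i ω := funext fun i => hω i
      simp only [Set.mem_preimage]
      rw [this]
    -- AEStronglyMeasurable' (G t) of the F-conditional expectation
    have hfun : AEStronglyMeasurable[G t] (P[X t | F t]) P := by
      have hgm : Measurable[MeasurableSpace.comap (fun ω (i : Fin t) => X i ω)
          MeasurableSpace.pi] (P[X t | F t]) :=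
        stronglyMeasurable_condExp.measurable.mono (le_of_eq (aux_sup_comap X t)) le_rfl
      obtain ⟨φ, hφ, hgφ⟩ := aux_doob _ _ hgm
      choose ZX hZXm hZXe using hZX
      refine ⟨fun ω => φ (fun i : Fin t => ZX i ω),
        (hφ.comp (aux_pi_lambda _ fun i => hZXm i)).stronglyMeasurable, ?_⟩
      have hall : ∀ᵐ ω ∂P, ∀ i : Fin t, X i ω = ZX i ω := ae_all_iff.2 fun i => hZXe i
      filter_upwards [hall] with ω hω
      rw [hgφ ω]
      congr 1
      exact funext fun i => hω i
    have hE : (P[X t | F t]) =ᵐ[P] (P[X t | G t]) :=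
      aux_condexp_eq P (hGle t) (hFle t) (hXint t) hsets hfun
    -- bounds on the conditional expectation
    have hmbound : ∀ᵐ ω ∂P, μ - C ≤ (P[X t | G t]) ω ∧ (P[X t | G t]) ω ≤ μ + C := by
      filter_upwards [hcond t, hE] with ω h1 h2
      rw [← h2]
      have := abs_le.1 h1
      constructor <;> linarith [this.1, this.2]
    have hYdef' : ∀ᵐ ω ∂P, Y t ω = (μ + C) * X t ω / (P[X t | G t]) ω := hYdef t
    have hμC'' : μ + C ≠ 0 := ne_of_gt hμC' 
    -- conclusion 1
    have hC1 : ∀ᵐ ω ∂P, X t ω ≤ Y t ω := by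
      filter_upwards [hYdef', hmbound, hrange t] with ω hY hm hr
      have hm0 : 0 < (P[X t | G t]) ω := lt_of_lt_of_le hμC hm.1
      rw [hY, le_div_iff₀ hm0]
      nlinarith [hr.1, hm.2]
    -- conclusion 2
    have hC2 : ∀ᵐ ω ∂P, Y t ω ∈ Set.Icc 0 (b * (μ + C) / (μ - C)) := by
      filter_upwards [hYdef', hmbound, hrange t] with ω hY hm hr
      have hm0 : 0 < (P[X t | G t]) ω := lt_of_lt_of_le hμC hm.1
      constructor
      · rw [hY]
        exact div_nonneg (mul_nonneg (le_of_lt hμC') hr.1) (le_of_lt hm0)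
      · rw [hY, show b * (μ + C) = (μ + C) * b from mul_comm _ _]
        exact div_le_div₀ (mul_nonneg (le_of_lt hμC') (le_of_lt hb))
          (by nlinarith [hr.2]) hμC hm.1
    have hYint : Integrable (Y t) P :=
      (integrable_const (b * (μ + C) / (μ - C))).mono' (hYmeas t).aestronglyMeasurable (by
        filter_upwards [hC2] with ω h
        rw [Real.norm_eq_abs, abs_of_nonneg h.1]
        exact h.2)
    -- conclusion 3
    have hcongr : Y t =ᵐ[P] (fun ω => (μ + C) / (P[X t | G t]) ω) * X t := by
      filter_upwards [hYdef'] with ω hY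
      simp only [Pi.mul_apply]
      rw [hY, div_mul_eq_mul_div]
    have hsm : StronglyMeasurable[G t] (fun ω => (μ + C) / (P[X t | G t]) ω) :=
      (measurable_const.div stronglyMeasurable_condExp.measurable).stronglyMeasurable
    have hC3 : (P[Y t | G t]) =ᵐ[P] fun _ => μ + C := by
      have h1 : (P[Y t | G t]) =ᵐ[P] (P[(fun ω => (μ + C) / (P[X t | G t]) ω) * X t | G t]) :=
        condExp_congr_ae hcongr
      have h2 := condExp_mul_of_stronglyMeasurable_left hsm (hYint.congr hcongr) (hXint t)
      refine h1.trans (h2.trans ?_)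
      filter_upwards [hmbound] with ω hm
      have hm0 : (P[X t | G t]) ω ≠ 0 := ne_of_gt (lt_of_lt_of_le hμC hm.1)
      simp only [Pi.mul_apply]
      rw [div_mul_cancel₀ _ hm0]
    -- a.e. G-measurable version of X t
    have hXY : ∃ Z, Measurable[G (t+1)] Z ∧ X t =ᵐ[P] Z := by
      refine ⟨fun ω => Y t ω * (P[X t | G t]) ω / (μ + C), ?_, ?_⟩
      · exact ((((comap_measurable (Y t)).mono
          (hcomapYle (Nat.lt_succ_self t)) le_rfl).mul
          (stronglyMeasurable_condExp.measurable.mono (hGmono (Nat.le_succ t)) le_rfl)).div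
          measurable_const)
      · filter_upwards [hYdef', hmbound] with ω hY hm
        have hm0 : (P[X t | G t]) ω ≠ 0 := ne_of_gt (lt_of_lt_of_le hμC hm.1)
        rw [hY]
        field_simp
    -- a.e. F-measurable version of Y t
    have hYX : ∃ Z, Measurable[F (t+1)] Z ∧ Y t =ᵐ[P] Z := by
      refine ⟨fun ω => (μ + C) * X t ω / (P[X t | F t]) ω, ?_, ?_⟩
      · exact ((measurable_const.mul ((comap_measurable (X t)).mono
          (hcomapXle (Nat.lt_succ_self t)) le_rfl)).div
          (stronglyMeasurable_condExp.measurable.mono (hFmono (Nat.le_succ t)) le_rfl))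
      · filter_upwards [hYdef', hE] with ω hY hEω
        rw [hY, hEω]
    exact ⟨⟨hE.symm, hXY, hYX⟩, hC1, hC2, hC3⟩
  intro t
  exact (key t).2
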